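/- Let ε ∈ ℝ and let u : ℝ → ℝ be four times continuously differentiable on [0,1] with u(0) = u''(0) = u(1) = u'(1) = 0. Set g(x) = u'''(x) + u(x)·u'(x) + ε·u''''(x) and h(x) = −u'(0) + (1/2)∫₀¹ u(ξ)² dξ − (1/2)·u(x)² + ∫₀¹ ξ·g(ξ) dξ − ∫ₓ¹ g(ξ) dξ. Then for every x ∈ [0,1]: u''(x) + ε·u'''(x) = ε·u''(1) + h(x). -/
import Mathlib

open Set MeasureTheory intervalIntegral

/-- FTC on a subinterval of `[0,1]` for a function with derivative within `Icc 0 1`. -/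
lemma ftc_icc (f f' : ℝ → ℝ)
    (hf : ∀ x ∈ Set.Icc (0:ℝ) 1, HasDerivWithinAt f (f' x) (Set.Icc (0:ℝ) 1) x)
    (hcont : ContinuousOn f' (Set.Icc (0:ℝ) 1))
    {a b : ℝ} (ha : a ∈ Set.Icc (0:ℝ) 1) (hb : b ∈ Set.Icc (0:ℝ) 1) (hab : a ≤ b) :
    ∫ x in a..b, f' x = f b - f a := by
  have hsub : Set.Icc a b ⊆ Set.Icc (0:ℝ) 1 := Set.Icc_subset_Icc ha.1 hb.2
  apply intervalIntegral.integral_eq_sub_of_hasDeriv_right_of_le hab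
  · exact fun x hx => ((hf x (hsub hx)).continuousWithinAt).mono hsub
  · intro x hx
    have hx01 : x ∈ Set.Icc (0:ℝ) 1 := hsub (Set.Ioo_subset_Icc_self hx)
    refine (hf x hx01).mono_of_mem_nhdsWithin ?_
    refine Filter.mem_of_superset (Ioo_mem_nhdsGT_of_mem ?_) Set.Ioo_subset_Icc_self
    exact ⟨ha.1.trans hx.1.le, lt_of_lt_of_le hx.2 hb.2⟩
  · exact (Set.uIcc_of_le hab ▸ hcont.mono hsub).intervalIntegrable

/-- Identity (3.49) in Estimate VII of the paper: combining the two integrated forms of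
the stationary equation `u''' + u u' + ε u'''' = g`. Here `u₁, u₂, u₃, u₄` are the first
four derivatives of `u` on `[0,1]`. -/
theorem estimateVII_identity_349 (ε : ℝ) (u u₁ u₂ u₃ u₄ : ℝ → ℝ)
    (hd1 : ∀ x ∈ Set.Icc (0 : ℝ) 1, HasDerivWithinAt u (u₁ x) (Set.Icc (0 : ℝ) 1) x)
    (hd2 : ∀ x ∈ Set.Icc (0 : ℝ) 1, HasDerivWithinAt u₁ (u₂ x) (Set.Icc (0 : ℝ) 1) x)
    (hd3 : ∀ x ∈ Set.Icc (0 : ℝ) 1, HasDerivWithinAt u₂ (u₃ x) (Set.Icc (0 : ℝ) 1) x)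
    (hd4 : ∀ x ∈ Set.Icc (0 : ℝ) 1, HasDerivWithinAt u₃ (u₄ x) (Set.Icc (0 : ℝ) 1) x)
    (hc : ContinuousOn u₄ (Set.Icc (0 : ℝ) 1))
    (hu0 : u 0 = 0) (hu2 : u₂ 0 = 0) (hu1 : u 1 = 0) (hux1 : u₁ 1 = 0)
    (g : ℝ → ℝ) (hg : ∀ x, g x = u₃ x + u x * u₁ x + ε * u₄ x)
    (h : ℝ → ℝ)
    (hh : ∀ x, h x = -u₁ 0 + (1 / 2) * (∫ ξ in (0 : ℝ)..1, (u ξ) ^ 2) -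
      (1 / 2) * (u x) ^ 2 + (∫ ξ in (0 : ℝ)..1, ξ * g ξ) - ∫ ξ in x..1, g ξ) :
    ∀ x ∈ Set.Icc (0 : ℝ) 1, u₂ x + ε * u₃ x = ε * u₂ 1 + h x := by
  intro x hx
  have h0 : (0:ℝ) ∈ Set.Icc (0:ℝ) 1 := by norm_num
  have h1 : (1:ℝ) ∈ Set.Icc (0:ℝ) 1 := by norm_num
  -- continuity of the derivatives
  have cu : ContinuousOn u (Set.Icc (0:ℝ) 1) := fun y hy => (hd1 y hy).continuousWithinAt
  have cu1 : ContinuousOn u₁ (Set.Icc (0:ℝ) 1) := fun y hy => (hd2 y hy).continuousWithinAt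
  have cu2 : ContinuousOn u₂ (Set.Icc (0:ℝ) 1) := fun y hy => (hd3 y hy).continuousWithinAt
  have cu3 : ContinuousOn u₃ (Set.Icc (0:ℝ) 1) := fun y hy => (hd4 y hy).continuousWithinAt
  -- antiderivative of g
  set G : ℝ → ℝ := fun y => u₂ y + (u y)^2 / 2 + ε * u₃ y with hG
  have hGder : ∀ y ∈ Set.Icc (0:ℝ) 1, HasDerivWithinAt G (g y) (Set.Icc (0:ℝ) 1) y := by
    intro y hy
    have : HasDerivWithinAt G (u₃ y + (2 * u y ^ 1 * u₁ y) / 2 + ε * u₄ y)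
        (Set.Icc (0:ℝ) 1) y := by
      exact ((hd3 y hy).add (((hd1 y hy).pow 2).div_const 2)).add ((hd4 y hy).const_mul ε)
    convert this using 1
    rw [hg y]; ring
  have cg : ContinuousOn g (Set.Icc (0:ℝ) 1) := by
    have : ContinuousOn (fun y => u₃ y + u y * u₁ y + ε * u₄ y) (Set.Icc (0:ℝ) 1) :=
      (cu3.add (cu.mul cu1)).add (hc.const_smul ε)
    exact this.congr fun y _ => hg y
  -- ∫ₓ¹ g = G 1 - G x
  have hint1 : (∫ ξ in x..1, g ξ) = G 1 - G x := ftc_icc G g hGder cg hx h1 hx.2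
  -- antiderivative P with P' = ξ g ξ + u²/2
  set P : ℝ → ℝ := fun y => y * u₂ y - u₁ y + y * (u y)^2 / 2 + ε * (y * u₃ y - u₂ y) with hP
  set P₁ : ℝ → ℝ := fun y => y * g y + (u y)^2 / 2 with hP₁
  have hPder : ∀ y ∈ Set.Icc (0:ℝ) 1, HasDerivWithinAt P (P₁ y) (Set.Icc (0:ℝ) 1) y := by
    intro y hy
    have hid : HasDerivWithinAt (fun z : ℝ => z) 1 (Set.Icc (0:ℝ) 1) y :=
      (hasDerivAt_id y).hasDerivWithinAt
    have : HasDerivWithinAt P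
        ((1 * u₂ y + y * u₃ y - u₂ y + (1 * (u y)^2 + y * (2 * u y ^ 1 * u₁ y)) / 2)
          + ε * ((1 * u₃ y + y * u₄ y) - u₃ y)) (Set.Icc (0:ℝ) 1) y := by
      exact (((hid.mul (hd3 y hy)).sub (hd2 y hy)).add
        (((hid.mul ((hd1 y hy).pow 2)).div_const 2))).add
        ((((hid.mul (hd4 y hy)).sub (hd3 y hy)).const_mul ε))
    convert this using 1
    simp only [hP₁, hg y]; ring
  have cP₁ : ContinuousOn P₁ (Set.Icc (0:ℝ) 1) := by
    exact (continuousOn_id.mul cg).add (((cu.pow 2)).div_const 2)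
  have hintP : (∫ ξ in (0:ℝ)..1, P₁ ξ) = P 1 - P 0 :=
    ftc_icc P P₁ hPder cP₁ h0 h1 zero_le_one
  -- integrability pieces on [0,1]
  have iP₁ : IntervalIntegrable P₁ volume 0 1 :=
    ContinuousOn.intervalIntegrable (by rw [Set.uIcc_of_le zero_le_one]; exact cP₁)
  have iu2 : IntervalIntegrable (fun ξ => (u ξ)^2 / 2) volume 0 1 :=
    ContinuousOn.intervalIntegrable (by rw [Set.uIcc_of_le zero_le_one]; exact (cu.pow 2).div_const 2)
  -- ∫₀¹ ξ g ξ
  have hint2 : (∫ ξ in (0:ℝ)..1, ξ * g ξ)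
      = (P 1 - P 0) - (1/2) * (∫ ξ in (0:ℝ)..1, (u ξ)^2) := by
    have e1 : (∫ ξ in (0:ℝ)..1, ξ * g ξ)
        = ∫ ξ in (0:ℝ)..1, (P₁ ξ - (u ξ)^2 / 2) := by
      apply intervalIntegral.integral_congr
      intro ξ _
      simp only [hP₁]; ring
    rw [e1, intervalIntegral.integral_sub iP₁ iu2, hintP]
    have : (∫ ξ in (0:ℝ)..1, (u ξ)^2 / 2) = (∫ ξ in (0:ℝ)..1, (u ξ)^2) / 2 :=
      intervalIntegral.integral_div 2 _
    rw [this]; ring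
  -- put everything together
  rw [hh x, hint1, hint2]
  simp only [hP, hG, hu0, hu1, hu2, hux1]
  ring
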